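/- β(p̂) ≤ 2‖p̂ − p*‖_∞, where β(p̂) = min over feasible flows x of D(p̂, x), D(p, x) = max over simple unblocked paths H w.r.t. x of d_H(p) (or 0 if none exist), and d_H(p) = max{0, p_{s(H)} − p_{t(H)} − Σ_{H^+} a_{ij} + Σ_{H^-} a_{ij}}. -/

import Mathlib

open Finset

/-- A path in a directed graph on `Fin n` with edge set `E`: a sequence of
nodes, where each step traverses an edge of `E` either forward (`dir = true`)
or backward (`dir = false`). -/
structure MCFPath (n : ℕ) (E : Finset (Fin n × Fin n)) where
  len : ℕ
  pos : 0 < len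
  node : Fin (len + 1) → Fin n
  dir : Fin len → Bool
  mem : ∀ i : Fin len,
    if dir i then (node i.castSucc, node i.succ) ∈ E
    else (node i.succ, node i.castSucc) ∈ E

namespace MCFPath

variable {n : ℕ} {E : Finset (Fin n × Fin n)}

/-- The underlying edge of `E` traversed at step `i`. -/
def edge (H : MCFPath n E) (i : Fin H.len) : Fin n × Fin n :=
  if H.dir i then (H.node i.castSucc, H.node i.succ)
  else (H.node i.succ, H.node i.castSucc)

/-- The start node of the path. -/
def src (H : MCFPath n E) : Fin n := H.node 0

/-- The end node of the path. -/
def tgt (H : MCFPath n E) : Fin n := H.node (Fin.last H.len)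

/-- A path is simple if it visits each node at most once. -/
def Simple (H : MCFPath n E) : Prop := Function.Injective H.node

/-- A path is unblocked w.r.t. `x` if forward edges are below capacity and
backward edges are above the lower bound. -/
def Unblocked (H : MCFPath n E) (x b c : Fin n × Fin n → ℝ) : Prop :=
  ∀ i : Fin H.len,
    if H.dir i then x (H.edge i) < c (H.edge i) else b (H.edge i) < x (H.edge i)

/-- The reduced cost length
`d_H(p) = max {0, p_{s(H)} − p_{t(H)} − Σ_{H⁺} a + Σ_{H⁻} a}`. -/
noncomputable def dH (H : MCFPath n E) (a : Fin n × Fin n → ℝ) (p : Fin n → ℝ) : ℝ :=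
  max 0 (p H.src - p H.tgt
    - (∑ i, if H.dir i then a (H.edge i) else 0)
    + (∑ i, if H.dir i then 0 else a (H.edge i)))

end MCFPath

/-- `D(p,x)`: the maximum of `d_H(p)` over simple unblocked paths w.r.t. `x`
(or `0` if none exist). -/
noncomputable def Dval (n : ℕ) (E : Finset (Fin n × Fin n)) (a b c : Fin n × Fin n → ℝ)
    (p : Fin n → ℝ) (x : Fin n × Fin n → ℝ) : ℝ :=
  sSup (insert 0 {r : ℝ | ∃ H : MCFPath n E, H.Simple ∧ H.Unblocked x b c ∧ r = H.dH a p})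

/-- A feasible flow: capacity constraints and flow conservation. -/
def FeasibleFlow (n : ℕ) (E : Finset (Fin n × Fin n)) (b c : Fin n × Fin n → ℝ)
    (s : Fin n → ℝ) (x : Fin n × Fin n → ℝ) : Prop :=
  (∀ e ∈ E, b e ≤ x e ∧ x e ≤ c e) ∧
  (∀ i : Fin n,
    (∑ e ∈ E.filter (fun e => e.1 = i), x e)
      - (∑ e ∈ E.filter (fun e => e.2 = i), x e) = s i)

/-- `β(p) = min over feasible flows x of D(p,x)`. -/
noncomputable def betaVal (n : ℕ) (E : Finset (Fin n × Fin n)) (a b c : Fin n × Fin n → ℝ)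
    (s : Fin n → ℝ) (p : Fin n → ℝ) : ℝ :=
  sInf {r : ℝ | ∃ x, FeasibleFlow n E b c s x ∧ r = Dval n E a b c p x}

lemma telescope_fin (m : ℕ) (g : Fin (m + 1) → ℝ) :
    ∑ i : Fin m, (g i.castSucc - g i.succ) = g 0 - g (Fin.last m) := by
  induction m with
  | zero => simp
  | succ m ih =>
    rw [Fin.sum_univ_castSucc]
    have key : ∑ i : Fin m, (g i.castSucc.castSucc - g i.castSucc.succ)
        = g 0 - g (Fin.last m).castSucc := by
      have := ih (fun j => g j.castSucc)
      simpa only [Fin.succ_castSucc, Fin.castSucc_zero] using this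
    rw [key, Fin.succ_last]
    ring

/-- `β(p̂) ≤ 2‖p̂ − p*‖_∞` for any optimal primal-dual pair `(x*, p*)`
satisfying complementary slackness. -/
theorem beta_le_two_linf (n : ℕ) (hn : 0 < n) (E : Finset (Fin n × Fin n))
    (a b c : Fin n × Fin n → ℝ) (s : Fin n → ℝ)
    (xstar : Fin n × Fin n → ℝ) (pstar phat : Fin n → ℝ)
    (hfeas : FeasibleFlow n E b c s xstar)
    (hcs : ∀ e ∈ E, (xstar e < c e → pstar e.1 - pstar e.2 - a e ≤ 0) ∧
                    (b e < xstar e → 0 ≤ pstar e.1 - pstar e.2 - a e)) :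
    betaVal n E a b c s phat
      ≤ 2 * Finset.univ.sup' ⟨⟨0, hn⟩, Finset.mem_univ _⟩
          (fun i => |phat i - pstar i|) := by
  set M := Finset.univ.sup' ⟨⟨0, hn⟩, Finset.mem_univ _⟩ (fun i => |phat i - pstar i|) with hM
  have hMle : ∀ i : Fin n, |phat i - pstar i| ≤ M := by
    intro i
    rw [hM]
    exact Finset.le_sup' (fun i => |phat i - pstar i|) (Finset.mem_univ i)
  have hM0 : 0 ≤ M := le_trans (abs_nonneg _) (hMle ⟨0, hn⟩)
  -- Every simple unblocked path w.r.t. xstar has dH ≤ 2M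
  have hpath : ∀ H : MCFPath n E, H.Unblocked xstar b c → H.dH a phat ≤ 2 * M := by
    intro H hub
    unfold MCFPath.dH
    apply max_le (by linarith)
    -- telescoping bound on pstar
    have hstep : ∀ i : Fin H.len,
        pstar (H.node i.castSucc) - pstar (H.node i.succ)
          ≤ (if H.dir i then a (H.edge i) else 0) - (if H.dir i then 0 else a (H.edge i)) := by
      intro i
      have hmem := H.mem i
      have hu := hub i
      by_cases hd : H.dir i
      · simp only [hd, if_true] at hmem hu ⊢
        have hE : H.edge i = (H.node i.castSucc, H.node i.succ) := by
          simp [MCFPath.edge, hd]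
        rw [hE] at hu ⊢
        have := (hcs _ hmem).1 hu
        simp at this ⊢
        linarith
      · simp only [hd, if_false, Bool.false_eq_true] at hmem hu ⊢
        have hE : H.edge i = (H.node i.succ, H.node i.castSucc) := by
          simp [MCFPath.edge, hd]
        rw [hE] at hu ⊢
        have := (hcs _ hmem).2 hu
        simp at this ⊢
        linarith
    have htel : pstar H.src - pstar H.tgt
        ≤ (∑ i, if H.dir i then a (H.edge i) else 0)
          - (∑ i, if H.dir i then 0 else a (H.edge i)) := by
      have := telescope_fin H.len (fun j => pstar (H.node j))
      rw [← Finset.sum_sub_distrib]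
      calc pstar H.src - pstar H.tgt
          = ∑ i : Fin H.len, (pstar (H.node i.castSucc) - pstar (H.node i.succ)) := by
            rw [this]; rfl
        _ ≤ _ := Finset.sum_le_sum (fun i _ => hstep i)
    have h1 : phat H.src - pstar H.src ≤ M := le_trans (le_abs_self _) (hMle _)
    have h2 : pstar H.tgt - phat H.tgt ≤ M := by
      have := hMle H.tgt
      rw [abs_sub_comm] at this
      exact le_trans (le_abs_self _) this
    linarith
  -- Dval at xstar is ≤ 2M
  have hD : Dval n E a b c phat xstar ≤ 2 * M := by
    apply Real.sSup_le _ (by linarith)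
    rintro r hr
    rcases hr with rfl | ⟨H, _, hub, rfl⟩
    · linarith
    · exact hpath H hub
  -- betaVal ≤ Dval at xstar
  have hmem : Dval n E a b c phat xstar ∈
      {r : ℝ | ∃ x, FeasibleFlow n E b c s x ∧ r = Dval n E a b c phat x} :=
    ⟨xstar, hfeas, rfl⟩
  have hbdd : BddBelow {r : ℝ | ∃ x, FeasibleFlow n E b c s x ∧ r = Dval n E a b c phat x} := by
    refine ⟨0, ?_⟩
    rintro r ⟨x, _, rfl⟩
    apply Real.sSup_nonneg
    rintro y (rfl | ⟨H, _, _, rfl⟩)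
    · exact le_refl 0
    · exact le_max_left _ _
  calc betaVal n E a b c s phat ≤ Dval n E a b c phat xstar := csInf_le hbdd hmem
    _ ≤ 2 * M := hD
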